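/- The ideal Fin of finite subsets of ℕ is increasing-invariant, and it is the only increasing-invariant ideal among all non-tall ideals on ℕ: if I ≠ Fin is an ideal on ℕ that is increasing-invariant, then I is tall. -/

import Mathlib

open Filter Finset Topology

/-- `cnt A n = |A ∩ [0,n)|`. -/
noncomputable def cnt (A : Set ℕ) (n : ℕ) : ℕ := (A ∩ Set.Iio n).ncard

/-- The simple density ideal associated to a weight `g`. -/
def Zg (g : ℕ → ℝ) : Set (Set ℕ) :=
  {A | Tendsto (fun n => (cnt A n : ℝ) / g n) atTop (𝓝 0)}

/-- The ideal of asymptotic density zero sets. -/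
def Zid : Set (Set ℕ) :=
  {A | Tendsto (fun n => (cnt A n : ℝ) / n) atTop (𝓝 0)}

/-- An ideal is increasing-invariant. -/
def IncInv (I : Set (Set ℕ)) : Prop :=
  ∀ B ∈ I, ∀ C : Set ℕ, (∀ n, cnt C n ≤ cnt B n) → C ∈ I

/-- Tallness. -/
def Tall (I : Set (Set ℕ)) : Prop :=
  ∀ A : Set ℕ, A.Infinite → ∃ B ⊆ A, B.Infinite ∧ B ∈ I

/-- The conditions on `f` for the Erdős–Ulam ideal `EU f` to be defined. -/
def EUcond (f : ℕ → ℝ) : Prop :=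
  (∀ n, 0 ≤ f n) ∧ Tendsto (fun n => ∑ i ∈ Finset.range n, f i) atTop atTop ∧
    Tendsto (fun n => f n / ∑ i ∈ Finset.range (n + 1), f i) atTop (𝓝 0)

/-- The Erdős–Ulam ideal associated to `f`. -/
def EU (f : ℕ → ℝ) : Set (Set ℕ) :=
  {A | Tendsto
    (fun n => (∑ i ∈ Finset.range n, Set.indicator A f i) / ∑ i ∈ Finset.range n, f i)
    atTop (𝓝 0)}

/-- Being an Erdős–Ulam ideal. -/
def IsEUIdeal (I : Set (Set ℕ)) : Prop := ∃ f : ℕ → ℝ, EUcond f ∧ I = EU f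

lemma cnt_le_ncard (B : Set ℕ) (n : ℕ) (hB : B.Finite) : cnt B n ≤ B.ncard :=
  Set.ncard_le_ncard Set.inter_subset_left hB

lemma exists_cnt_ge (C : Set ℕ) (hC : C.Infinite) (m : ℕ) : ∃ n, m ≤ cnt C n := by
  obtain ⟨s, hsC, hcard⟩ := hC.exists_subset_card_eq m
  refine ⟨(s.sup id) + 1, ?_⟩
  have hsub : (↑s : Set ℕ) ⊆ C ∩ Set.Iio (s.sup id + 1) := by
    intro x hx
    exact ⟨hsC hx, Nat.lt_succ_of_le (Finset.le_sup (f := id) hx)⟩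
  calc m = (↑s : Set ℕ).ncard := by simp [hcard]
    _ ≤ _ := Set.ncard_le_ncard hsub (Set.Finite.inter_of_right (Set.finite_Iio _) C)

lemma cnt_range_le (B : Set ℕ) (hB : B.Infinite) (f : ℕ → ℕ) (hf : Function.Injective f)
    (hfB : ∀ k, Nat.nth (· ∈ B) k ≤ f k) (n : ℕ) :
    cnt (Set.range f) n ≤ cnt B n := by
  have hB' : (setOf (· ∈ B)).Infinite := hB
  apply Set.ncard_le_ncard_of_injOn (fun c => Nat.nth (· ∈ B) (Function.invFun f c))
  · rintro c ⟨⟨k, rfl⟩, hlt⟩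
    have hk : Function.invFun f (f k) = k := Function.leftInverse_invFun hf k
    simp only [hk]
    exact ⟨Nat.nth_mem_of_infinite hB' k, lt_of_le_of_lt (hfB k) hlt⟩
  · rintro c ⟨⟨k, rfl⟩, _⟩ c' ⟨⟨k', rfl⟩, _⟩ h
    simp only [Function.leftInverse_invFun hf k, Function.leftInverse_invFun hf k'] at h
    rw [Nat.nth_injective hB' h]

/-- `Fin` is increasing-invariant, and it is the only
increasing-invariant ideal among non-tall ideals. -/
theorem stmt_8 :
    IncInv {A : Set ℕ | A.Finite} ∧
    ∀ I : Set (Set ℕ),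
      (∀ A ∈ I, ∀ B ⊆ A, B ∈ I) → (∀ A ∈ I, ∀ B ∈ I, A ∪ B ∈ I) →
      (∀ A : Set ℕ, A.Finite → A ∈ I) → Set.univ ∉ I →
      I ≠ {A : Set ℕ | A.Finite} → IncInv I → Tall I := by
  constructor
  · intro B hB C hC
    have : ¬ C.Infinite := by
      intro hCinf
      obtain ⟨n, hn⟩ := exists_cnt_ge C hCinf (B.ncard + 1)
      have h1 := hC n
      have h2 := cnt_le_ncard B n hB
      omega
    exact Set.not_infinite.mp this
  · intro I _ _ hfin _ hne hinc A hA
    have hex : ∃ B ∈ I, B.Infinite := by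
      by_contra h
      push_neg at h
      apply hne
      ext X
      exact ⟨fun hX => h X hX, fun hX => hfin X hX⟩
    obtain ⟨B, hBI, hBinf⟩ := hex
    have hA' : (setOf (· ∈ A)).Infinite := hA
    have hB' : (setOf (· ∈ B)).Infinite := hBinf
    set f : ℕ → ℕ := fun k => Nat.nth (· ∈ A) (Nat.nth (· ∈ B) k) with hf
    have hmono : StrictMono f := (Nat.nth_strictMono hA').comp (Nat.nth_strictMono hB')
    refine ⟨Set.range f, ?_, ?_, ?_⟩
    · rintro _ ⟨k, rfl⟩
      exact Nat.nth_mem_of_infinite hA' _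
    · exact Set.infinite_range_of_injective hmono.injective
    · refine hinc B hBI _ (cnt_range_le B hBinf f hmono.injective (fun k => ?_))
      exact (Nat.nth_strictMono hA').le_apply
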